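/- arXiv:2311.12294 — 3 statements merged into one kernel-verified Lean document; each statement's English description precedes it below -/
import Mathlib

section
/- For any d ≥ 1, c > 0, α ∈ (0,2], and t > 0, the iterated integral ∫_0^t ∫_0^s ∫_{ℝ^d} exp(-(s-r)(|ξ|² + c|ξ|^α)) dξ dr ds is finite if and only if d = 1. -/
open MeasureTheory Real Set

section Aux

/-- Gaussian integrability on Euclidean space. -/
lemma aux_gauss_integrable {d : ℕ} {b : ℝ} (hb : 0 < b) :
    Integrable (fun ξ : EuclideanSpace ℝ (Fin d) => rexp (-b * ‖ξ‖ ^ 2)) := by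
  have h := GaussianFourier.integrable_cexp_neg_mul_sq_norm_add
      (b := (b : ℂ)) (V := EuclideanSpace ℝ (Fin d)) (by simpa using hb) 0
      (0 : EuclideanSpace ℝ (Fin d))
  have h2 := h.re
  refine h2.congr (Filter.Eventually.of_forall fun ξ => ?_)
  simp only [inner_zero_left, Complex.ofReal_zero, zero_mul, add_zero, RCLike.re_to_complex]
  rw [show -(b:ℂ) * (‖ξ‖:ℂ)^2 = ((-b * ‖ξ‖^2 : ℝ):ℂ) by push_cast; ring, Complex.exp_ofReal_re]

/-- The Gaussian lintegral on Euclidean space. -/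
lemma aux_gauss_lintegral {d : ℕ} {b : ℝ} (hb : 0 < b) :
    ∫⁻ ξ : EuclideanSpace ℝ (Fin d), ENNReal.ofReal (rexp (-b * ‖ξ‖ ^ 2)) =
      ENNReal.ofReal ((π / b) ^ ((d : ℝ) / 2)) := by
  rw [← ofReal_integral_eq_lintegral_ofReal (aux_gauss_integrable hb)
      (Filter.Eventually.of_forall fun _ => (Real.exp_pos _).le)]
  rw [GaussianFourier.integral_rexp_neg_mul_sq_norm hb]
  norm_num [finrank_euclideanSpace_fin]

lemma aux_rpow_le {x : ℝ} (hx : 0 ≤ x) {α : ℝ} (h0 : 0 < α) (h2 : α ≤ 2) :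
    x ^ α ≤ 1 + x ^ 2 := by
  rcases le_total x 1 with h | h
  · have h1 : x ^ α ≤ 1 := Real.rpow_le_one hx h h0.le
    nlinarith [sq_nonneg x]
  · have h1 : x ^ α ≤ x ^ (2:ℝ) := Real.rpow_le_rpow_of_exponent_le h h2
    rw [Real.rpow_two] at h1
    linarith

/-- change of variables `r ↦ s - r` on `Ioo 0 s`. -/
lemma aux_comp_sub (s : ℝ) (f : ℝ → ENNReal) :
    ∫⁻ r in Ioo (0:ℝ) s, f (s - r) = ∫⁻ u in Ioo (0:ℝ) s, f u := by
  have hmp : MeasurePreserving (fun x : ℝ => s - x) volume volume :=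
    Measure.measurePreserving_sub_left volume s
  have hemb : MeasurableEmbedding (fun x : ℝ => s - x) :=
    (MeasurableEquiv.subLeft s).measurableEmbedding
  have hpre : (fun x : ℝ => s - x) ⁻¹' Ioo 0 s = Ioo 0 s := by
    ext x
    simp only [mem_preimage, mem_Ioo]
    constructor <;> rintro ⟨h1, h2⟩ <;> constructor <;> linarith
  have h := hmp.setLIntegral_comp_preimage_emb hemb f (Ioo 0 s)
  rwa [hpre] at h

lemma aux_inv_lintegral_top {s : ℝ} (hs : 0 < s) :
    ∫⁻ u in Ioo (0:ℝ) s, ENNReal.ofReal u⁻¹ = ⊤ := by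
  by_contra h
  have hnn : 0 ≤ᵐ[volume.restrict (Ioo (0:ℝ) s)] fun u : ℝ => u⁻¹ :=
    ae_restrict_of_forall_mem measurableSet_Ioo fun x hx => (inv_nonneg.2 hx.1.le)
  have hint : IntegrableOn (fun u : ℝ => u⁻¹) (Ioo 0 s) := by
    refine ⟨measurable_inv.aestronglyMeasurable, ?_⟩
    rw [hasFiniteIntegral_iff_ofReal hnn]
    exact lt_top_iff_ne_top.2 h
  have h2 : IntegrableOn (fun u : ℝ => u ^ (-1 : ℝ)) (Ioo 0 s) :=
    hint.congr_fun (fun x _ => (Real.rpow_neg_one x).symm ▸ rfl) measurableSet_Ioo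
  have := (intervalIntegral.integrableOn_Ioo_rpow_iff hs).1 h2
  norm_num at this

/-- reduce outer set integral over the triangle to an iterated integral. -/
lemma aux_outer (t : ℝ) (h : ℝ → ENNReal) (hh : Measurable h) :
    ∫⁻ p in {p : ℝ × ℝ | 0 < p.2 ∧ p.2 < p.1 ∧ p.1 < t}, h (p.1 - p.2)
      = ∫⁻ s in Ioo (0:ℝ) t, ∫⁻ u in Ioo (0:ℝ) s, h u := by
  set S : Set (ℝ × ℝ) := {p : ℝ × ℝ | 0 < p.2 ∧ p.2 < p.1 ∧ p.1 < t} with hSdef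
  have hS : MeasurableSet S := by
    have h1 : MeasurableSet {p : ℝ × ℝ | 0 < p.2} :=
      measurableSet_lt measurable_const measurable_snd
    have h2 : MeasurableSet {p : ℝ × ℝ | p.2 < p.1} :=
      measurableSet_lt measurable_snd measurable_fst
    have h3 : MeasurableSet {p : ℝ × ℝ | p.1 < t} :=
      measurableSet_lt measurable_fst measurable_const
    exact h1.inter (h2.inter h3)
  have hm : Measurable fun p : ℝ × ℝ => S.indicator (fun q : ℝ × ℝ => h (q.1 - q.2)) p :=
    (hh.comp (measurable_fst.sub measurable_snd)).indicator hS
  rw [← lintegral_indicator hS, Measure.volume_eq_prod _ _, lintegral_prod _ hm.aemeasurable,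
    ← lintegral_indicator measurableSet_Ioo]
  congr 1
  funext s
  by_cases hst : s ∈ Ioo (0:ℝ) t
  · have heq : (fun r => S.indicator (fun q : ℝ × ℝ => h (q.1 - q.2)) (s, r))
        = (Ioo 0 s).indicator (fun r => h (s - r)) := by
      funext r
      by_cases hr : r ∈ Ioo (0:ℝ) s
      · rw [Set.indicator_of_mem hr,
          Set.indicator_of_mem (show (s, r) ∈ S from ⟨hr.1, hr.2, hst.2⟩)]
      · rw [Set.indicator_of_notMem hr, Set.indicator_of_notMem ?_]
        rintro ⟨h1, h2, _⟩
        exact hr ⟨h1, h2⟩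
    rw [heq, lintegral_indicator measurableSet_Ioo, aux_comp_sub s h,
      Set.indicator_of_mem hst]
  · rw [Set.indicator_of_notMem hst]
    have heq : (fun r => S.indicator (fun q : ℝ × ℝ => h (q.1 - q.2)) (s, r))
        = fun _ => (0 : ENNReal) := by
      funext r
      apply Set.indicator_of_notMem
      rintro ⟨h1, h2, h3⟩
      exact hst ⟨lt_trans h1 h2, h3⟩
    rw [heq]
    simp

/-- upper bound for the inner Gaussian-type integral. -/
lemma aux_upper {d : ℕ} {c α u : ℝ} (hc : 0 < c) (hα0 : 0 < α) (hu : 0 < u) :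
    ∫⁻ ξ : EuclideanSpace ℝ (Fin d),
        ENNReal.ofReal (rexp (-u * (‖ξ‖ ^ 2 + c * ‖ξ‖ ^ α)))
      ≤ ENNReal.ofReal ((π / u) ^ ((d : ℝ) / 2)) := by
  calc ∫⁻ ξ : EuclideanSpace ℝ (Fin d),
        ENNReal.ofReal (rexp (-u * (‖ξ‖ ^ 2 + c * ‖ξ‖ ^ α)))
      ≤ ∫⁻ ξ : EuclideanSpace ℝ (Fin d), ENNReal.ofReal (rexp (-u * ‖ξ‖ ^ 2)) := by
        refine lintegral_mono fun ξ => ENNReal.ofReal_le_ofReal (Real.exp_le_exp.2 ?_)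
        nlinarith [Real.rpow_nonneg (norm_nonneg ξ) α, sq_nonneg ‖ξ‖,
          mul_nonneg (mul_nonneg hu.le hc.le) (Real.rpow_nonneg (norm_nonneg ξ) α)]
    _ = ENNReal.ofReal ((π / u) ^ ((d : ℝ) / 2)) := aux_gauss_lintegral hu

/-- lower bound for the inner Gaussian-type integral. -/
lemma aux_lower {d : ℕ} {c α u : ℝ} (hc : 0 < c) (hα0 : 0 < α) (hα2 : α ≤ 2) (hu : 0 < u) :
    ENNReal.ofReal (rexp (-((1 + c) * u)) * (π / ((1 + c) * u)) ^ ((d : ℝ) / 2))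
      ≤ ∫⁻ ξ : EuclideanSpace ℝ (Fin d),
          ENNReal.ofReal (rexp (-u * (‖ξ‖ ^ 2 + c * ‖ξ‖ ^ α))) := by
  have hb : 0 < (1 + c) * u := by positivity
  calc ENNReal.ofReal (rexp (-((1 + c) * u)) * (π / ((1 + c) * u)) ^ ((d : ℝ) / 2))
      = ENNReal.ofReal (rexp (-((1 + c) * u))) *
          ∫⁻ ξ : EuclideanSpace ℝ (Fin d), ENNReal.ofReal (rexp (-((1 + c) * u) * ‖ξ‖ ^ 2)) := by
        rw [aux_gauss_lintegral hb, ← ENNReal.ofReal_mul (Real.exp_pos _).le]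
    _ = ∫⁻ ξ : EuclideanSpace ℝ (Fin d),
          ENNReal.ofReal (rexp (-((1 + c) * u)) * rexp (-((1 + c) * u) * ‖ξ‖ ^ 2)) := by
        rw [← lintegral_const_mul' _ _ ENNReal.ofReal_ne_top]
        congr 1
        funext ξ
        rw [ENNReal.ofReal_mul (Real.exp_pos _).le]
    _ ≤ ∫⁻ ξ : EuclideanSpace ℝ (Fin d),
          ENNReal.ofReal (rexp (-u * (‖ξ‖ ^ 2 + c * ‖ξ‖ ^ α))) := by
        refine lintegral_mono fun ξ => ENNReal.ofReal_le_ofReal ?_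
        rw [← Real.exp_add]
        refine Real.exp_le_exp.2 ?_
        have h1 : ‖ξ‖ ^ α ≤ 1 + ‖ξ‖ ^ 2 := aux_rpow_le (norm_nonneg ξ) hα0 hα2
        nlinarith [sq_nonneg ‖ξ‖, Real.rpow_nonneg (norm_nonneg ξ) α,
          mul_nonneg hu.le hc.le, mul_nonneg hu.le (sq_nonneg ‖ξ‖),
          mul_le_mul_of_nonneg_left h1 (mul_nonneg hu.le hc.le)]

end Aux

/-- `∫₀ᵗ∫₀ˢ∫_{ℝ^d} exp(-(s-r)(|ξ|² + c|ξ|^α)) dξ dr ds < ∞` iff `d = 1`. -/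
theorem integrable_stable_kernel_iff (d : ℕ) (hd : 1 ≤ d) (c α t : ℝ) (hc : 0 < c)
    (hα : α ∈ Set.Ioc (0 : ℝ) 2) (ht : 0 < t) :
    IntegrableOn
      (fun x : (ℝ × ℝ) × EuclideanSpace ℝ (Fin d) =>
        Real.exp (-(x.1.1 - x.1.2) * (‖x.2‖ ^ 2 + c * ‖x.2‖ ^ α)))
      ({p : ℝ × ℝ | 0 < p.2 ∧ p.2 < p.1 ∧ p.1 < t} ×ˢ Set.univ) ↔ d = 1 := by
  obtain ⟨hα0, hα2⟩ := hα
  set S : Set (ℝ × ℝ) := {p : ℝ × ℝ | 0 < p.2 ∧ p.2 < p.1 ∧ p.1 < t} with hSdef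
  set F : (ℝ × ℝ) × EuclideanSpace ℝ (Fin d) → ℝ :=
    fun x => Real.exp (-(x.1.1 - x.1.2) * (‖x.2‖ ^ 2 + c * ‖x.2‖ ^ α)) with hFdef
  have hS : MeasurableSet S := by
    have h1 : MeasurableSet {p : ℝ × ℝ | 0 < p.2} :=
      measurableSet_lt measurable_const measurable_snd
    have h2 : MeasurableSet {p : ℝ × ℝ | p.2 < p.1} :=
      measurableSet_lt measurable_snd measurable_fst
    have h3 : MeasurableSet {p : ℝ × ℝ | p.1 < t} :=
      measurableSet_lt measurable_fst measurable_const
    exact h1.inter (h2.inter h3)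
  have hFcont : Continuous F := by
    apply Real.continuous_exp.comp
    have hn : Continuous fun x : (ℝ × ℝ) × EuclideanSpace ℝ (Fin d) => ‖x.2‖ :=
      continuous_snd.norm
    exact ((continuous_fst.fst.sub continuous_fst.snd).neg).mul
      ((hn.pow 2).add (continuous_const.mul (hn.rpow_const fun x => Or.inr hα0.le)))
  have hres : AEStronglyMeasurable F (volume.restrict (S ×ˢ (univ : Set (EuclideanSpace ℝ (Fin d))))) :=
    hFcont.aestronglyMeasurable.restrict
  have hiff : IntegrableOn F (S ×ˢ univ) ↔
      (∫⁻ p in S, ∫⁻ ξ : EuclideanSpace ℝ (Fin d),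
        ENNReal.ofReal (rexp (-(p.1 - p.2) * (‖ξ‖ ^ 2 + c * ‖ξ‖ ^ α)))) < ⊤ := by
    have h1 : IntegrableOn F (S ×ˢ univ) ↔
        HasFiniteIntegral F (volume.restrict (S ×ˢ univ)) :=
      ⟨fun h => h.2, fun h => ⟨hres, h⟩⟩
    rw [h1, hasFiniteIntegral_iff_ofReal
      (Filter.Eventually.of_forall fun x => (Real.exp_pos _).le)]
    have hrw : (volume : Measure ((ℝ × ℝ) × EuclideanSpace ℝ (Fin d))).restrict (S ×ˢ univ)
        = ((volume : Measure (ℝ × ℝ)).restrict S).prod (volume : Measure (EuclideanSpace ℝ (Fin d))) := by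
      rw [Measure.volume_eq_prod _ _, ← Measure.prod_restrict, Measure.restrict_univ]
    rw [hrw]
    have hfm : AEMeasurable (fun a : (ℝ × ℝ) × EuclideanSpace ℝ (Fin d) => ENNReal.ofReal (F a))
        (((volume : Measure (ℝ × ℝ)).restrict S).prod volume) :=
      (ENNReal.measurable_ofReal.comp hFcont.measurable).aemeasurable
    rw [lintegral_prod _ hfm]
  rw [hiff]
  constructor
  · -- if integrable then d = 1
    intro hfin
    by_contra hd1
    have hd2 : 2 ≤ d := by omega
    have hd2' : (2:ℝ) ≤ (d:ℝ) := by exact_mod_cast hd2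
    -- the lower bound constant
    set C : ℝ := rexp (-((1 + c) * t)) * ((π / (1 + c)) ^ ((d : ℝ) / 2) * t ^ (1 - (d : ℝ) / 2))
      with hCdef
    have hCpos : 0 < C := by
      have h1c : (0:ℝ) < 1 + c := by linarith
      have : (0:ℝ) < π / (1 + c) := div_pos pi_pos h1c
      positivity
    -- real-valued pointwise lower bound
    have hreal : ∀ u : ℝ, 0 < u → u < t →
        C * u⁻¹ ≤ rexp (-((1 + c) * u)) * (π / ((1 + c) * u)) ^ ((d : ℝ) / 2) := by
      intro u hu hut
      have h1c : (0:ℝ) < 1 + c := by linarith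
      have hexp : rexp (-((1 + c) * t)) ≤ rexp (-((1 + c) * u)) :=
        Real.exp_le_exp.2 (by nlinarith)
      have hsplit : (π / ((1 + c) * u)) ^ ((d : ℝ) / 2)
          = (π / (1 + c)) ^ ((d : ℝ) / 2) * u ^ (-((d : ℝ) / 2)) := by
        rw [show π / ((1 + c) * u) = (π / (1 + c)) * u⁻¹ by
          rw [← div_div, div_eq_mul_inv]]
        rw [Real.mul_rpow (by positivity) (inv_nonneg.2 hu.le),
          Real.inv_rpow hu.le, ← Real.rpow_neg hu.le]
      have hpow : t ^ (1 - (d : ℝ) / 2) * u⁻¹ ≤ u ^ (-((d : ℝ) / 2)) := by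
        have h1 : t ^ (1 - (d : ℝ) / 2) ≤ u ^ (1 - (d : ℝ) / 2) :=
          Real.rpow_le_rpow_of_nonpos hu hut.le (by linarith)
        have h2 : u ^ (-((d : ℝ) / 2)) = u ^ (1 - (d : ℝ) / 2) * u⁻¹ := by
          rw [← Real.rpow_neg_one u, ← Real.rpow_add hu]
          ring_nf
        rw [h2]
        exact mul_le_mul_of_nonneg_right h1 (inv_nonneg.2 hu.le)
      rw [hsplit, hCdef]
      have hP : (0:ℝ) ≤ (π / (1 + c)) ^ ((d : ℝ) / 2) :=
        Real.rpow_nonneg (by positivity) _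
      calc rexp (-((1 + c) * t)) * ((π / (1 + c)) ^ ((d : ℝ) / 2) * t ^ (1 - (d : ℝ) / 2)) * u⁻¹
          = rexp (-((1 + c) * t)) * ((π / (1 + c)) ^ ((d : ℝ) / 2) * (t ^ (1 - (d : ℝ) / 2) * u⁻¹)) := by
            ring
        _ ≤ rexp (-((1 + c) * u)) * ((π / (1 + c)) ^ ((d : ℝ) / 2) * u ^ (-((d : ℝ) / 2))) := by
            apply mul_le_mul hexp _ _ (Real.exp_pos _).le
            · exact mul_le_mul_of_nonneg_left hpow hP
            · have : (0:ℝ) ≤ t ^ (1 - (d : ℝ) / 2) * u⁻¹ :=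
                mul_nonneg (Real.rpow_nonneg ht.le _) (inv_nonneg.2 hu.le)
              positivity
    -- the divergent integral
    have hT : (∫⁻ p in S, ENNReal.ofReal ((p.1 - p.2)⁻¹)) = ⊤ := by
      rw [hSdef, aux_outer t _ measurable_inv.ennreal_ofReal]
      rw [setLIntegral_congr_fun measurableSet_Ioo
        (fun s hs => aux_inv_lintegral_top hs.1)]
      rw [setLIntegral_const, Real.volume_Ioo]
      rw [ENNReal.top_mul]
      simp [ht]
    have hmono : ENNReal.ofReal C * ∫⁻ p in S, ENNReal.ofReal ((p.1 - p.2)⁻¹)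
        ≤ ∫⁻ p in S, ∫⁻ ξ : EuclideanSpace ℝ (Fin d),
            ENNReal.ofReal (rexp (-(p.1 - p.2) * (‖ξ‖ ^ 2 + c * ‖ξ‖ ^ α))) := by
      rw [← lintegral_const_mul' _ _ ENNReal.ofReal_ne_top]
      refine setLIntegral_mono' hS fun p hp => ?_
      have hu : 0 < p.1 - p.2 := sub_pos.2 hp.2.1
      have hut : p.1 - p.2 < t := by
        have := hp.1
        have := hp.2.2
        linarith
      calc ENNReal.ofReal C * ENNReal.ofReal ((p.1 - p.2)⁻¹)
          = ENNReal.ofReal (C * (p.1 - p.2)⁻¹) := by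
            rw [ENNReal.ofReal_mul hCpos.le]
        _ ≤ ENNReal.ofReal (rexp (-((1 + c) * (p.1 - p.2))) *
              (π / ((1 + c) * (p.1 - p.2))) ^ ((d : ℝ) / 2)) :=
            ENNReal.ofReal_le_ofReal (hreal _ hu hut)
        _ ≤ _ := aux_lower hc hα0 hα2 hu
    rw [hT, ENNReal.mul_top (by simpa [ENNReal.ofReal_eq_zero] using hCpos.not_ge)] at hmono
    exact absurd (lt_of_le_of_lt hmono hfin) (lt_irrefl _)
  · -- if d = 1 then integrable
    intro hd1
    subst hd1
    set h : ℝ → ENNReal := fun u => ENNReal.ofReal ((π / u) ^ ((1:ℝ) / 2)) with hhdef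
    have hhm : Measurable h := by
      rw [hhdef]; fun_prop
    have hstep : (∫⁻ p in S, ∫⁻ ξ : EuclideanSpace ℝ (Fin 1),
        ENNReal.ofReal (rexp (-(p.1 - p.2) * (‖ξ‖ ^ 2 + c * ‖ξ‖ ^ α))))
          ≤ ∫⁻ p in S, h (p.1 - p.2) := by
      refine setLIntegral_mono' hS fun p hp => ?_
      have hu : 0 < p.1 - p.2 := sub_pos.2 hp.2.1
      have := aux_upper (d := 1) hc hα0 hu
      simpa [hhdef] using this
    refine lt_of_le_of_lt hstep ?_
    rw [hSdef, aux_outer t h hhm]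
    set M : ENNReal := ∫⁻ u in Ioo (0:ℝ) t, h u with hMdef
    have hMlt : M < ⊤ := by
      have hint : IntegrableOn (fun u : ℝ => (π / u) ^ ((1:ℝ) / 2)) (Ioo 0 t) := by
        have h2 : IntegrableOn (fun u : ℝ => π ^ ((1:ℝ) / 2) * u ^ (-(1:ℝ) / 2)) (Ioo 0 t) :=
          ((intervalIntegral.integrableOn_Ioo_rpow_iff ht).2 (by norm_num)).const_mul _
        refine h2.congr_fun (fun u hu => ?_) measurableSet_Ioo
        beta_reduce
        rw [show (-(1:ℝ) / 2) = -((1:ℝ)/2) by ring, Real.rpow_neg hu.1.le,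
          ← div_eq_mul_inv, ← Real.div_rpow pi_pos.le hu.1.le]
      have hnn : 0 ≤ᵐ[volume.restrict (Ioo (0:ℝ) t)] fun u : ℝ => (π / u) ^ ((1:ℝ) / 2) :=
        ae_restrict_of_forall_mem measurableSet_Ioo fun u hu =>
          Real.rpow_nonneg (div_nonneg pi_pos.le hu.1.le) _
      rw [hMdef, ← ofReal_integral_eq_lintegral_ofReal hint hnn]
      exact ENNReal.ofReal_lt_top
    calc ∫⁻ s in Ioo (0:ℝ) t, ∫⁻ u in Ioo (0:ℝ) s, h u
        ≤ ∫⁻ _ in Ioo (0:ℝ) t, M := by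
          refine setLIntegral_mono' measurableSet_Ioo fun s hs => ?_
          exact lintegral_mono_set (Ioo_subset_Ioo_right hs.2.le)
      _ = M * volume (Ioo (0:ℝ) t) := setLIntegral_const _ _
      _ < ⊤ := ENNReal.mul_lt_top hMlt (by simp [Real.volume_Ioo])
end

section
/- Let β ∈ (0,1) and let ψ_δ(t) = δ^{-1} 1_{[0,δ]}(t). There exists a constant C depending only on β such that for all δ > 0 and all s, r ≥ 0 with s ≠ r, ∫_0^∞ ∫_0^∞ ψ_δ(u - s) ψ_δ(v - r) |u - v|^{-β} du dv ≤ C |s - r|^{-β}. -/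
open MeasureTheory Set

namespace ApproxIdSKAux

lemma absk_intervalIntegrable {β : ℝ} (hβ1 : β < 1) (a b : ℝ) :
    IntervalIntegrable (fun t : ℝ => |t| ^ (-β)) volume a b := by
  have key : ∀ c : ℝ, 0 ≤ c → IntervalIntegrable (fun t : ℝ => |t| ^ (-β)) volume 0 c := by
    intro c hc
    have h1 : IntervalIntegrable (fun t : ℝ => t ^ (-β)) volume 0 c :=
      intervalIntegral.intervalIntegrable_rpow' (by linarith)
    rw [intervalIntegrable_iff, uIoc_of_le hc] at h1 ⊢
    exact h1.congr_fun (fun t ht => by rw [abs_of_pos ht.1]) measurableSet_Ioc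
  have key2 : ∀ c : ℝ, IntervalIntegrable (fun t : ℝ => |t| ^ (-β)) volume 0 c := by
    intro c
    rcases le_total 0 c with hc | hc
    · exact key c hc
    · have h := key (-c) (by linarith)
      rw [IntervalIntegrable.iff_comp_neg] at h
      simpa using h
  exact (key2 a).symm.trans (key2 b)

lemma absk_integral {β : ℝ} (hβ1 : β < 1) {c : ℝ} (hc : 0 ≤ c) :
    ∫ t in (0:ℝ)..c, |t| ^ (-β) = c ^ (1 - β) / (1 - β) := by
  have h : ∫ t in (0:ℝ)..c, |t| ^ (-β) = ∫ t in (0:ℝ)..c, t ^ (-β) := by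
    apply intervalIntegral.integral_congr
    intro t ht
    rw [uIcc_of_le hc] at ht
    simp only []
    rw [abs_of_nonneg ht.1]
  rw [h, integral_rpow (Or.inl (by linarith))]
  rw [Real.zero_rpow (by intro hcon; linarith : -β + 1 ≠ 0)]
  have e : -β + 1 = 1 - β := by ring
  rw [e, sub_zero]

lemma kernel_interval_integral {β : ℝ} (hβ1 : β < 1) {δ : ℝ} (hδ : 0 ≤ δ) :
    ∫ t in (-δ)..δ, |t| ^ (-β) = 2 * (δ ^ (1 - β) / (1 - β)) := by
  have h1 : ∫ t in (-δ)..(0:ℝ), |t| ^ (-β) = ∫ t in (0:ℝ)..δ, |t| ^ (-β) := by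
    have h := intervalIntegral.integral_comp_neg (a := 0) (b := δ) (fun t : ℝ => |t| ^ (-β))
    simpa using h.symm
  rw [← intervalIntegral.integral_add_adjacent_intervals
      (absk_intervalIntegrable hβ1 (-δ) 0) (absk_intervalIntegrable hβ1 0 δ), h1,
    absk_integral hβ1 hδ]
  ring

lemma kernel_integrableOn {β : ℝ} (hβ1 : β < 1) (u aa bb : ℝ) (hab : aa ≤ bb) :
    IntegrableOn (fun v => |u - v| ^ (-β)) (Icc aa bb) := by
  have h := (absk_intervalIntegrable hβ1 (u - aa) (u - bb)).comp_sub_left u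
  simp only [sub_sub_cancel] at h
  rw [intervalIntegrable_iff, uIoc_of_le hab] at h
  exact (integrableOn_Icc_iff_integrableOn_Ioc).2 h

lemma kernel_Icc_integral {β : ℝ} (hβ1 : β < 1) {δ : ℝ} (hδ : 0 ≤ δ) (u : ℝ) :
    ∫ v in Icc (u - δ) (u + δ), |u - v| ^ (-β) = 2 * (δ ^ (1 - β) / (1 - β)) := by
  rw [integral_Icc_eq_integral_Ioc,
    ← intervalIntegral.integral_of_le (by linarith : u - δ ≤ u + δ),
    intervalIntegral.integral_comp_sub_left (fun t : ℝ => |t| ^ (-β)) u]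
  have e1 : u - (u + δ) = -δ := by ring
  have e2 : u - (u - δ) = δ := by ring
  rw [e1, e2, kernel_interval_integral hβ1 hδ]

lemma psi_eq_indicator (δ r : ℝ) :
    (fun v => if v - r ∈ Icc (0:ℝ) δ then δ⁻¹ else 0)
      = indicator (Icc r (r + δ)) (fun _ => δ⁻¹) := by
  funext v
  simp only [indicator_apply, mem_Icc]
  refine if_congr ⟨fun h => ⟨by linarith [h.1], by linarith [h.2]⟩,
    fun h => ⟨by linarith [h.1], by linarith [h.2]⟩⟩ rfl rfl

lemma psi_mass {δ r : ℝ} (hδ : 0 < δ) (hr : 0 ≤ r) :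
    ∫ v in Ioi (0:ℝ), (if v - r ∈ Icc (0:ℝ) δ then δ⁻¹ else 0) = 1 := by
  rw [show (fun v => if v - r ∈ Icc (0:ℝ) δ then δ⁻¹ else 0)
      = indicator (Icc r (r + δ)) (fun _ => δ⁻¹) from psi_eq_indicator δ r,
    integral_indicator measurableSet_Icc, setIntegral_const, measureReal_def,
    Measure.restrict_apply measurableSet_Icc]
  have hvol : volume (Icc r (r + δ) ∩ Ioi 0) = ENNReal.ofReal δ := by
    apply le_antisymm
    · calc volume (Icc r (r + δ) ∩ Ioi 0) ≤ volume (Icc r (r + δ)) :=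
          measure_mono inter_subset_left
        _ = ENNReal.ofReal δ := by rw [Real.volume_Icc]; congr 1; ring
    · calc ENNReal.ofReal δ = volume (Ioc r (r + δ)) := by rw [Real.volume_Ioc]; congr 1; ring
        _ ≤ volume (Icc r (r + δ) ∩ Ioi 0) := measure_mono fun x hx =>
            ⟨⟨hx.1.le, hx.2⟩, lt_of_le_of_lt hr hx.1⟩
  rw [hvol, ENNReal.toReal_ofReal hδ.le, smul_eq_mul, mul_inv_cancel₀ hδ.ne']

lemma psi_integrable {δ r : ℝ} :
    Integrable (fun v => if v - r ∈ Icc (0:ℝ) δ then δ⁻¹ else 0)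
      (volume.restrict (Ioi 0)) := by
  rw [psi_eq_indicator δ r, integrable_indicator_iff measurableSet_Icc]
  exact integrableOn_const (lt_of_le_of_lt (Measure.restrict_apply_le _ _)
    measure_Icc_lt_top).ne

lemma half_rpow_neg {β d : ℝ} (hd : 0 ≤ d) : (d / 2) ^ (-β) = 2 ^ β * d ^ (-β) := by
  have h2 : ((2:ℝ)⁻¹) ^ (-β) = 2 ^ β := by
    rw [Real.inv_rpow (by norm_num), ← Real.rpow_neg (by norm_num), neg_neg]
  rw [div_eq_mul_inv, Real.mul_rpow hd (by norm_num), h2, mul_comm]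

end ApproxIdSKAux

open ApproxIdSKAux in
/-- Averaging the singular kernel `|u-v|^{-β}` against the approximate identity
`ψ_δ = δ⁻¹ 1_{[0,δ]}` is controlled by `C |s-r|^{-β}`. -/
theorem approx_identity_singular_kernel_bound (β : ℝ) (hβ : β ∈ Set.Ioo (0 : ℝ) 1) :
    ∃ C > 0, ∀ δ > (0 : ℝ), ∀ s r : ℝ, 0 ≤ s → 0 ≤ r → s ≠ r →
      (∫ u in Set.Ioi (0 : ℝ), ∫ v in Set.Ioi (0 : ℝ),
          (if u - s ∈ Set.Icc (0 : ℝ) δ then δ⁻¹ else 0) *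
            (if v - r ∈ Set.Icc (0 : ℝ) δ then δ⁻¹ else 0) * |u - v| ^ (-β))
        ≤ C * |s - r| ^ (-β) := by
  obtain ⟨hβ0, hβ1⟩ := hβ
  have h1β : (0:ℝ) < 1 - β := by linarith
  refine ⟨(1 + 2 / (1 - β)) * 2 ^ β, by positivity, ?_⟩
  intro δ hδ s r hs hr hsr
  have hdpos : 0 < |s - r| := abs_pos.2 (sub_ne_zero.2 hsr)
  have hd0 : (0:ℝ) ≤ |s - r| ^ (-β) := Real.rpow_nonneg hdpos.le _
  have hδi : (0:ℝ) ≤ δ⁻¹ := by positivity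
  have hK1 : (1:ℝ) ≤ 1 + 2 / (1 - β) := by
    have : (0:ℝ) < 2 / (1 - β) := by positivity
    linarith
  -- nonnegativity of the ψ factors
  have hnn : ∀ t c : ℝ, (0:ℝ) ≤ (if t - c ∈ Set.Icc (0:ℝ) δ then δ⁻¹ else 0) := by
    intro t c; split <;> positivity
  -- key pointwise-in-u bound for the inner integral
  have key : ∀ u : ℝ,
      (∫ v in Set.Ioi (0:ℝ), (if u - s ∈ Set.Icc (0:ℝ) δ then δ⁻¹ else 0) *
        ((if v - r ∈ Set.Icc (0:ℝ) δ then δ⁻¹ else 0) * |u - v| ^ (-β)))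
      ≤ (if u - s ∈ Set.Icc (0:ℝ) δ then δ⁻¹ else 0) *
          ((1 + 2 / (1 - β)) * (2 ^ β * |s - r| ^ (-β))) := by
    intro u
    rcases le_or_gt (2 * δ) |s - r| with hcase | hcase
    · -- far case : δ ≤ |s-r|/2, kernel bounded by (|s-r|/2)^(-β)
      have hbound : ∀ v : ℝ,
          (if u - s ∈ Set.Icc (0:ℝ) δ then δ⁻¹ else 0) *
            ((if v - r ∈ Set.Icc (0:ℝ) δ then δ⁻¹ else 0) * |u - v| ^ (-β))
          ≤ ((if u - s ∈ Set.Icc (0:ℝ) δ then δ⁻¹ else 0) * (2 ^ β * |s - r| ^ (-β))) *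
              (if v - r ∈ Set.Icc (0:ℝ) δ then δ⁻¹ else 0) := by
        intro v
        by_cases h1 : u - s ∈ Set.Icc (0:ℝ) δ
        · by_cases h2 : v - r ∈ Set.Icc (0:ℝ) δ
          · rw [if_pos h1, if_pos h2]
            obtain ⟨h1a, h1b⟩ := h1
            obtain ⟨h2a, h2b⟩ := h2
            have habs : |s - r| / 2 ≤ |u - v| := by
              have h3 : |(u - s) - (v - r)| ≤ δ :=
                abs_le.2 ⟨by linarith, by linarith⟩
              have h4 : |s - r| ≤ |u - v| + |(u - s) - (v - r)| := by
                calc |s - r| = |(u - v) + (-((u - s) - (v - r)))| := by congr 1; ring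
                  _ ≤ |u - v| + |(-((u - s) - (v - r)))| := abs_add_le _ _
                  _ = |u - v| + |(u - s) - (v - r)| := by rw [abs_neg]
              linarith
            have hk : |u - v| ^ (-β) ≤ 2 ^ β * |s - r| ^ (-β) := by
              rw [← half_rpow_neg hdpos.le]
              exact Real.rpow_le_rpow_of_nonpos (by positivity) habs (by linarith)
            calc δ⁻¹ * (δ⁻¹ * |u - v| ^ (-β))
                ≤ δ⁻¹ * (δ⁻¹ * (2 ^ β * |s - r| ^ (-β))) := by
                  exact mul_le_mul_of_nonneg_left
                    (mul_le_mul_of_nonneg_left hk hδi) hδi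
              _ = δ⁻¹ * (2 ^ β * |s - r| ^ (-β)) * δ⁻¹ := by ring
          · simp [h1, h2]
        · simp [h1]
      calc (∫ v in Set.Ioi (0:ℝ), (if u - s ∈ Set.Icc (0:ℝ) δ then δ⁻¹ else 0) *
            ((if v - r ∈ Set.Icc (0:ℝ) δ then δ⁻¹ else 0) * |u - v| ^ (-β)))
          ≤ ∫ v in Set.Ioi (0:ℝ),
              ((if u - s ∈ Set.Icc (0:ℝ) δ then δ⁻¹ else 0) * (2 ^ β * |s - r| ^ (-β))) *
                (if v - r ∈ Set.Icc (0:ℝ) δ then δ⁻¹ else 0) := by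
            refine integral_mono_of_nonneg (ae_of_all _ fun v => ?_)
              (psi_integrable.const_mul _) (ae_of_all _ hbound)
            exact mul_nonneg (hnn u s) (mul_nonneg (hnn v r)
              (Real.rpow_nonneg (abs_nonneg _) _))
        _ = ((if u - s ∈ Set.Icc (0:ℝ) δ then δ⁻¹ else 0) * (2 ^ β * |s - r| ^ (-β))) := by
            rw [integral_const_mul, psi_mass hδ hr, mul_one]
        _ ≤ (if u - s ∈ Set.Icc (0:ℝ) δ then δ⁻¹ else 0) *
              ((1 + 2 / (1 - β)) * (2 ^ β * |s - r| ^ (-β))) := by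
            refine mul_le_mul_of_nonneg_left ?_ (hnn u s)
            have hY : 0 ≤ 2 ^ β * |s - r| ^ (-β) :=
              mul_nonneg (Real.rpow_nonneg (by norm_num) _) hd0
            have hc : 0 ≤ 2 / (1 - β) := by positivity
            nlinarith [mul_nonneg hc hY]
    · -- near case : |s-r| < 2δ
      set ind1 : ℝ → ℝ := Set.indicator (Set.Icc (u - δ) (u + δ)) (fun v => |u - v| ^ (-β))
        with hind1
      set ind2 : ℝ → ℝ := Set.indicator (Set.Icc r (r + δ)) (fun _ => δ ^ (-β)) with hind2
      have hind1nn : ∀ v, 0 ≤ ind1 v := fun v =>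
        Set.indicator_nonneg (fun x _ => Real.rpow_nonneg (abs_nonneg _) _) v
      have hind2nn : ∀ v, 0 ≤ ind2 v := fun v =>
        Set.indicator_nonneg (fun x _ => Real.rpow_nonneg hδ.le _) v
      have hf1 : Integrable ind1 volume := (integrable_indicator_iff measurableSet_Icc).2
        (kernel_integrableOn hβ1 u _ _ (by linarith))
      have hf2 : Integrable ind2 volume := (integrable_indicator_iff measurableSet_Icc).2
        (integrableOn_const measure_Icc_lt_top.ne)
      have hh : Integrable (fun v => δ⁻¹ * (ind1 v + ind2 v)) volume :=
        (hf1.add hf2).const_mul δ⁻¹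
      have hpt : ∀ v : ℝ, (if v - r ∈ Set.Icc (0:ℝ) δ then δ⁻¹ else 0) * |u - v| ^ (-β)
          ≤ δ⁻¹ * (ind1 v + ind2 v) := by
        intro v
        by_cases h2 : v - r ∈ Set.Icc (0:ℝ) δ
        · rw [if_pos h2]
          by_cases h3 : v ∈ Set.Icc (u - δ) (u + δ)
          · have hv1 : ind1 v = |u - v| ^ (-β) := Set.indicator_of_mem h3 _
            rw [← hv1]
            exact mul_le_mul_of_nonneg_left (le_add_of_nonneg_right (hind2nn v)) hδi
          · have h3' : δ < |u - v| := by
              by_contra hcon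
              push_neg at hcon
              obtain ⟨hA, hB⟩ := abs_le.1 hcon
              exact h3 ⟨by linarith, by linarith⟩
            have hk : |u - v| ^ (-β) ≤ δ ^ (-β) :=
              Real.rpow_le_rpow_of_nonpos hδ h3'.le (by linarith)
            have hv2 : ind2 v = δ ^ (-β) := Set.indicator_of_mem
              (Set.mem_Icc.2 ⟨by linarith [h2.1], by linarith [h2.2]⟩) _
            calc δ⁻¹ * |u - v| ^ (-β) ≤ δ⁻¹ * δ ^ (-β) :=
                mul_le_mul_of_nonneg_left hk hδi
              _ ≤ δ⁻¹ * (ind1 v + ind2 v) :=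
                mul_le_mul_of_nonneg_left (by rw [hv2]; linarith [hind1nn v]) hδi
        · rw [if_neg h2, zero_mul]
          exact mul_nonneg hδi (add_nonneg (hind1nn v) (hind2nn v))
      have hI : (∫ v in Set.Ioi (0:ℝ),
            (if v - r ∈ Set.Icc (0:ℝ) δ then δ⁻¹ else 0) * |u - v| ^ (-β))
          ≤ (1 + 2 / (1 - β)) * δ ^ (-β) := by
        calc (∫ v in Set.Ioi (0:ℝ),
              (if v - r ∈ Set.Icc (0:ℝ) δ then δ⁻¹ else 0) * |u - v| ^ (-β))
            ≤ ∫ v in Set.Ioi (0:ℝ), δ⁻¹ * (ind1 v + ind2 v) :=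
              integral_mono_of_nonneg (ae_of_all _ fun v => mul_nonneg (hnn v r)
                  (Real.rpow_nonneg (abs_nonneg _) _))
                hh.restrict (ae_of_all _ hpt)
          _ ≤ ∫ v, δ⁻¹ * (ind1 v + ind2 v) :=
              setIntegral_le_integral hh (ae_of_all _ fun v =>
                mul_nonneg hδi (add_nonneg (hind1nn v) (hind2nn v)))
          _ = δ⁻¹ * (2 * (δ ^ (1 - β) / (1 - β)) + δ * δ ^ (-β)) := by
              rw [integral_const_mul, integral_add hf1 hf2, hind1, hind2,
                integral_indicator measurableSet_Icc, integral_indicator measurableSet_Icc,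
                kernel_Icc_integral hβ1 hδ.le u, setIntegral_const, measureReal_def, Real.volume_Icc,
                show r + δ - r = δ by ring, ENNReal.toReal_ofReal hδ.le, smul_eq_mul]
          _ = (1 + 2 / (1 - β)) * δ ^ (-β) := by
              have e1 : δ⁻¹ * δ ^ (1 - β) = δ ^ (-β) := by
                rw [← Real.rpow_neg_one δ, ← Real.rpow_add hδ]
                congr 1
                ring
              have e2 : δ⁻¹ * δ = 1 := inv_mul_cancel₀ hδ.ne'
              calc δ⁻¹ * (2 * (δ ^ (1 - β) / (1 - β)) + δ * δ ^ (-β))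
                  = (2 / (1 - β)) * (δ⁻¹ * δ ^ (1 - β)) + (δ⁻¹ * δ) * δ ^ (-β) := by ring
                _ = (1 + 2 / (1 - β)) * δ ^ (-β) := by rw [e1, e2]; ring
      have hδd : δ ^ (-β) ≤ 2 ^ β * |s - r| ^ (-β) := by
        rw [← half_rpow_neg hdpos.le]
        exact Real.rpow_le_rpow_of_nonpos (by positivity) (by linarith) (by linarith)
      rw [integral_const_mul]
      refine mul_le_mul_of_nonneg_left ?_ (hnn u s)
      calc (∫ v in Set.Ioi (0:ℝ),
            (if v - r ∈ Set.Icc (0:ℝ) δ then δ⁻¹ else 0) * |u - v| ^ (-β))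
          ≤ (1 + 2 / (1 - β)) * δ ^ (-β) := hI
        _ ≤ (1 + 2 / (1 - β)) * (2 ^ β * |s - r| ^ (-β)) :=
            mul_le_mul_of_nonneg_left hδd (by positivity)
  -- conclude from `key`
  have gnn : ∀ u : ℝ, (0:ℝ) ≤ ∫ v in Set.Ioi (0:ℝ),
      (if u - s ∈ Set.Icc (0:ℝ) δ then δ⁻¹ else 0) *
        ((if v - r ∈ Set.Icc (0:ℝ) δ then δ⁻¹ else 0) * |u - v| ^ (-β)) := by
    intro u
    exact integral_nonneg fun v => mul_nonneg (hnn u s)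
      (mul_nonneg (hnn v r) (Real.rpow_nonneg (abs_nonneg _) _))
  simp_rw [mul_assoc]
  calc (∫ u in Set.Ioi (0:ℝ), ∫ v in Set.Ioi (0:ℝ),
        (if u - s ∈ Set.Icc (0:ℝ) δ then δ⁻¹ else 0) *
          ((if v - r ∈ Set.Icc (0:ℝ) δ then δ⁻¹ else 0) * |u - v| ^ (-β)))
      ≤ ∫ u in Set.Ioi (0:ℝ), (if u - s ∈ Set.Icc (0:ℝ) δ then δ⁻¹ else 0) *
          ((1 + 2 / (1 - β)) * (2 ^ β * |s - r| ^ (-β))) :=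
        integral_mono_of_nonneg (ae_of_all _ gnn)
          (psi_integrable.mul_const _) (ae_of_all _ key)
    _ = (1 + 2 / (1 - β)) * (2 ^ β * |s - r| ^ (-β)) := by
        rw [integral_mul_const, psi_mass hδ hs, one_mul]
end

section
/- Let X, Y : [0,t] → ℝ^d be continuous functions, ε > 0, δ > 0, and define I(ε,δ) = ∫_{[0,t]^4} ψ_δ(u-s) ψ_δ(v-r) p_{|u-v|+2ε}(X_s - Y_r) dr ds du dv, where ψ_δ(w) = δ^{-1}1_{[0,δ]}(w). If d = 1, then I(ε,δ) → ∫_{[0,t]^2} p_{|s-r|}(X_s - Y_r) dr ds as (ε,δ) → (0,0). -/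
open MeasureTheory Real Filter

/-- The one-dimensional heat kernel. -/
noncomputable def heatKernel1 (u x : ℝ) : ℝ :=
  (2 * π * u) ^ (-(1 : ℝ) / 2) * Real.exp (-x ^ 2 / (2 * u))

namespace SmoothedAux

open Set intervalIntegral

/-- The approximate identity `ψ_δ`. -/
noncomputable def psi (δ a : ℝ) : ℝ := if a ∈ Set.Icc (0:ℝ) δ then δ⁻¹ else 0

lemma measurable_rpow_const (c : ℝ) : Measurable fun x : ℝ => x ^ c := by
  have h : (fun x : ℝ => x ^ c) = fun x =>
      if x = 0 then (if c = 0 then 1 else 0)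
      else if 0 < x then Real.exp (Real.log x * c)
      else Real.exp (Real.log x * c) * Real.cos (c * π) := by
    funext x
    split_ifs with h1 h2 h3
    · subst h1; subst h2; simp
    · subst h1; exact Real.zero_rpow h2
    · exact Real.rpow_def_of_pos h3 c
    · exact Real.rpow_def_of_neg (lt_of_le_of_ne (not_lt.mp h3) h1) c
  rw [h]
  refine Measurable.ite (MeasurableSet.singleton 0) measurable_const ?_
  refine Measurable.ite measurableSet_Ioi ?_ ?_
  · exact Real.measurable_exp.comp (Real.measurable_log.mul measurable_const)
  · exact (Real.measurable_exp.comp (Real.measurable_log.mul measurable_const)).mul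
      measurable_const

lemma hk_meas : Measurable fun p : ℝ × ℝ => heatKernel1 p.1 p.2 := by
  unfold heatKernel1
  exact ((measurable_rpow_const _).comp (measurable_const.mul measurable_fst)).mul
    (Real.measurable_exp.comp (((measurable_snd.pow measurable_const).neg).div
      (measurable_const.mul measurable_fst)))

lemma hk_nonneg {w x : ℝ} (hw : 0 ≤ w) : 0 ≤ heatKernel1 w x :=
  mul_nonneg (Real.rpow_nonneg (by positivity) _) (Real.exp_nonneg _)

lemma hk_zero (x : ℝ) : heatKernel1 0 x = 0 := by
  unfold heatKernel1
  rw [mul_zero, Real.zero_rpow (by norm_num), zero_mul]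

lemma hk_le {w : ℝ} (x : ℝ) (hw : 0 < w) : heatKernel1 w x ≤ (2 * π * w) ^ (-(1:ℝ) / 2) := by
  have h1 : Real.exp (-x ^ 2 / (2 * w)) ≤ 1 := by
    rw [Real.exp_le_one_iff]
    apply div_nonpos_of_nonpos_of_nonneg
    · nlinarith [sq_nonneg x]
    · positivity
  calc heatKernel1 w x ≤ (2 * π * w) ^ (-(1:ℝ) / 2) * 1 :=
        mul_le_mul_of_nonneg_left h1 (Real.rpow_nonneg (by positivity) _)
    _ = _ := mul_one _

lemma hk_bound_mono {w w' : ℝ} (hw : 0 < w) (h : w ≤ w') :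
    (2 * π * w') ^ (-(1:ℝ) / 2) ≤ (2 * π * w) ^ (-(1:ℝ) / 2) :=
  Real.rpow_le_rpow_of_nonpos (by positivity) (by nlinarith [Real.pi_pos]) (by norm_num)

lemma hk_contAt {w x : ℝ} (hw : 0 < w) :
    ContinuousAt (fun p : ℝ × ℝ => heatKernel1 p.1 p.2) (w, x) := by
  unfold heatKernel1
  apply ContinuousAt.mul
  · exact (Real.continuousAt_rpow_const _ _ (Or.inl (by positivity))).comp
      ((continuous_const.mul continuous_fst).continuousAt)
  · exact Real.continuous_exp.continuousAt.comp
      (ContinuousAt.div ((continuous_snd.pow 2).neg.continuousAt)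
        ((continuous_const.mul continuous_fst).continuousAt) (by simpa using by positivity))

lemma psi_nonneg {δ : ℝ} (hδ : 0 < δ) (a : ℝ) : 0 ≤ psi δ a := by
  unfold psi; split_ifs <;> positivity

lemma psi_le {δ : ℝ} (hδ : 0 < δ) (a : ℝ) : psi δ a ≤ δ⁻¹ := by
  unfold psi; split_ifs with h
  · exact le_refl _
  · positivity

lemma abs_psi_le {δ : ℝ} (hδ : 0 < δ) (a : ℝ) : |psi δ a| ≤ δ⁻¹ := by
  rw [abs_of_nonneg (psi_nonneg hδ a)]; exact psi_le hδ a

lemma psi_meas (δ : ℝ) : Measurable (psi δ) :=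
  Measurable.ite measurableSet_Icc measurable_const measurable_const

lemma psi_indicator (δ a : ℝ) (f : ℝ → ℝ) (x : ℝ) :
    psi δ (a - x) * f x = (Set.Icc (a - δ) a).indicator (fun y => δ⁻¹ * f y) x := by
  unfold psi
  have h : a - x ∈ Set.Icc (0:ℝ) δ ↔ x ∈ Set.Icc (a - δ) a := by
    simp only [Set.mem_Icc]; constructor <;> (intro ⟨h1, h2⟩; constructor <;> linarith)
  by_cases hx : x ∈ Set.Icc (a - δ) a
  · rw [if_pos (h.mpr hx), Set.indicator_of_mem hx]
  · rw [if_neg (fun hh => hx (h.mp hh)), Set.indicator_of_notMem hx, zero_mul]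

lemma isFiniteIcc (a b : ℝ) : IsFiniteMeasure (volume.restrict (Set.Icc a b)) := by
  constructor
  rw [Measure.restrict_apply_univ, Real.volume_Icc]
  exact ENNReal.ofReal_lt_top

lemma integrableOn_Icc_of_bounded {a b : ℝ} {f : ℝ → ℝ}
    (hm : AEStronglyMeasurable f (volume.restrict (Set.Icc a b))) {C : ℝ}
    (hb : ∀ x, ‖f x‖ ≤ C) : IntegrableOn f (Set.Icc a b) volume := by
  haveI := isFiniteIcc a b
  exact ⟨hm, HasFiniteIntegral.of_bounded (ae_of_all _ hb)⟩

lemma integral_psi_mul {t δ a : ℝ} (hδ : 0 < δ) (hda : δ ≤ a) (hat : a ≤ t) (f : ℝ → ℝ) :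
    ∫ x in Set.Icc (0:ℝ) t, psi δ (a - x) * f x
      = δ⁻¹ * ∫ x in Set.Icc (a - δ) a, f x := by
  have hsub : Set.Icc (a - δ) a ⊆ Set.Icc (0:ℝ) t :=
    Set.Icc_subset_Icc (by linarith) hat
  have h1 : ∀ x, psi δ (a - x) * f x
      = (Set.Icc (a - δ) a).indicator (fun y => δ⁻¹ * f y) x := psi_indicator δ a f
  simp only [h1]
  rw [MeasureTheory.integral_indicator measurableSet_Icc, Measure.restrict_restrict measurableSet_Icc,
    Set.inter_eq_left.mpr hsub, MeasureTheory.integral_const_mul]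

lemma integral_psi_le_one {t δ a : ℝ} (hδ : 0 < δ) :
    ∫ x in Set.Icc (0:ℝ) t, psi δ (a - x) ≤ 1 := by
  have h1 : ∀ x : ℝ, psi δ (a - x)
      = (Set.Icc (a - δ) a).indicator (fun _ => δ⁻¹) x := by
    intro x; simpa using psi_indicator δ a (fun _ => 1) x
  simp only [h1]
  rw [MeasureTheory.integral_indicator measurableSet_Icc, Measure.restrict_restrict measurableSet_Icc,
    setIntegral_const]
  have h2 : (volume (Set.Icc (a-δ) a ∩ Set.Icc (0:ℝ) t)).toReal ≤ δ := by
    have h3 : volume (Set.Icc (a-δ) a ∩ Set.Icc (0:ℝ) t) ≤ volume (Set.Icc (a-δ) a) :=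
      measure_mono Set.inter_subset_left
    rw [Real.volume_Icc] at h3
    have h4 := ENNReal.toReal_mono ENNReal.ofReal_ne_top h3
    rw [ENNReal.toReal_ofReal (by linarith)] at h4
    linarith
  calc (volume (Set.Icc (a-δ) a ∩ Set.Icc (0:ℝ) t)).toReal • δ⁻¹ ≤ δ * δ⁻¹ := by
        rw [smul_eq_mul]; exact mul_le_mul_of_nonneg_right h2 (by positivity)
    _ = 1 := mul_inv_cancel₀ hδ.ne'

lemma volIcc {a δ : ℝ} (hδ : 0 ≤ δ) : (volume (Set.Icc (a - δ) a)).toReal = δ := by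
  rw [Real.volume_Icc, show a - (a - δ) = δ by ring, ENNReal.toReal_ofReal hδ]

lemma avg_between {δ a t m M : ℝ} (hδ : 0 < δ) (ha : δ ≤ a) (hat : a ≤ t) {h : ℝ → ℝ}
    (hint : IntegrableOn h (Set.Icc (a - δ) a) volume)
    (hlow : ∀ x ∈ Set.Icc (a - δ) a, m ≤ h x)
    (hup : ∀ x ∈ Set.Icc (a - δ) a, h x ≤ M) :
    (∫ x in Set.Icc (0:ℝ) t, psi δ (a - x) * h x) ∈ Set.Icc m M := by
  rw [integral_psi_mul hδ ha hat]
  have hconst : IntegrableOn (fun _ : ℝ => (1:ℝ)) (Set.Icc (a - δ) a) volume := by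
    rw [IntegrableOn]
    exact integrable_const _
  have h1 : m * δ ≤ ∫ x in Set.Icc (a - δ) a, h x := by
    have := setIntegral_mono_on (by simpa using hconst.smul m) hint measurableSet_Icc hlow
    rwa [setIntegral_const, measureReal_def, volIcc hδ.le, smul_eq_mul, mul_comm δ m] at this
  have h2 : (∫ x in Set.Icc (a - δ) a, h x) ≤ M * δ := by
    have := setIntegral_mono_on hint (by simpa using hconst.smul M) measurableSet_Icc hup
    rwa [setIntegral_const, measureReal_def, volIcc hδ.le, smul_eq_mul, mul_comm δ M] at this
  constructor
  · calc m = δ⁻¹ * (m * δ) := by field_simp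
      _ ≤ _ := mul_le_mul_of_nonneg_left h1 (by positivity)
  · calc δ⁻¹ * ∫ x in Set.Icc (a - δ) a, h x ≤ δ⁻¹ * (M * δ) :=
        mul_le_mul_of_nonneg_left h2 (by positivity)
      _ = M := by field_simp

lemma weighted_le {δ a t B : ℝ} (hδ : 0 < δ) (hB : 0 ≤ B) {h : ℝ → ℝ}
    (hm : AEStronglyMeasurable h (volume.restrict (Set.Icc (0:ℝ) t)))
    (h0 : ∀ x, 0 ≤ h x) (hle : ∀ x, h x ≤ B) :
    ∫ x in Set.Icc (0:ℝ) t, psi δ (a - x) * h x ≤ B := by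
  have hpm : AEStronglyMeasurable (fun x => psi δ (a - x))
      (volume.restrict (Set.Icc (0:ℝ) t)) :=
    ((psi_meas δ).comp (measurable_const.sub measurable_id)).aestronglyMeasurable
  have hint : IntegrableOn h (Set.Icc (0:ℝ) t) volume :=
    integrableOn_Icc_of_bounded hm fun x => by
      rw [Real.norm_eq_abs, abs_of_nonneg (h0 x)]; exact hle x
  have hpint : IntegrableOn (fun x => psi δ (a - x)) (Set.Icc (0:ℝ) t) volume :=
    integrableOn_Icc_of_bounded hpm fun x => abs_psi_le hδ _
  have step : ∫ x in Set.Icc (0:ℝ) t, psi δ (a - x) * h x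
      ≤ ∫ x in Set.Icc (0:ℝ) t, psi δ (a - x) * B := by
    refine integral_mono ?_ (hpint.mul_const B) ?_
    · exact hint.bdd_mul hpm (ae_of_all _ fun x => abs_psi_le hδ _)
    · exact fun x => mul_le_mul_of_nonneg_left (hle x) (psi_nonneg hδ _)
  calc ∫ x in Set.Icc (0:ℝ) t, psi δ (a - x) * h x
      ≤ ∫ x in Set.Icc (0:ℝ) t, psi δ (a - x) * B := step
    _ = (∫ x in Set.Icc (0:ℝ) t, psi δ (a - x)) * B := integral_mul_const B _
    _ ≤ 1 * B := mul_le_mul_of_nonneg_right (integral_psi_le_one hδ) hB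
    _ = B := one_mul B

lemma inner_int (δ v : ℝ) {K : ℝ → ℝ → ℝ}
    (hKm : Measurable fun p : ℝ × ℝ => K p.1 p.2) {t : ℝ} :
    StronglyMeasurable fun s => ∫ r in Set.Icc (0:ℝ) t, psi δ (v - r) * K s r := by
  haveI := isFiniteIcc (0:ℝ) t
  exact (( ((psi_meas δ).comp (measurable_const.sub measurable_snd)).mul
    hKm).stronglyMeasurable).integral_prod_right'

lemma iterated_nonneg {t δ u v : ℝ} (hδ : 0 < δ) {K : ℝ → ℝ → ℝ}
    (hK0 : ∀ s r, 0 ≤ K s r) :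
    0 ≤ ∫ s in Set.Icc (0:ℝ) t, ∫ r in Set.Icc (0:ℝ) t,
      psi δ (u - s) * psi δ (v - r) * K s r :=
  integral_nonneg fun s => integral_nonneg fun r =>
    mul_nonneg (mul_nonneg (psi_nonneg hδ _) (psi_nonneg hδ _)) (hK0 s r)

lemma iterated_le {t δ u v B : ℝ} (hδ : 0 < δ) (hB : 0 ≤ B)
    {K : ℝ → ℝ → ℝ} (hKm : Measurable fun p : ℝ × ℝ => K p.1 p.2)
    (hK0 : ∀ s r, 0 ≤ K s r) (hKB : ∀ s r, K s r ≤ B) :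
    ∫ s in Set.Icc (0:ℝ) t, ∫ r in Set.Icc (0:ℝ) t,
      psi δ (u - s) * psi δ (v - r) * K s r ≤ B := by
  set I : ℝ → ℝ := fun s => ∫ r in Set.Icc (0:ℝ) t, psi δ (v - r) * K s r with hIdef
  have hmul : ∀ s, ∫ r in Set.Icc (0:ℝ) t, psi δ (u - s) * psi δ (v - r) * K s r
      = psi δ (u - s) * I s := by
    intro s; rw [hIdef]; simp only [mul_assoc]; exact integral_const_mul _ _
  simp only [hmul]
  have hI0 : ∀ s, 0 ≤ I s := fun s =>
    integral_nonneg fun r => mul_nonneg (psi_nonneg hδ _) (hK0 s r)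
  have hIB : ∀ s, I s ≤ B := by
    intro s
    refine weighted_le hδ hB ?_ (fun r => hK0 s r) (fun r => hKB s r)
    exact (hKm.comp measurable_prodMk_left).aestronglyMeasurable
  exact weighted_le hδ hB (inner_int δ v hKm).aestronglyMeasurable hI0 hIB

lemma iterated_avg_between {t δ u v m M C : ℝ} (hδ : 0 < δ)
    (hu : δ ≤ u) (hut : u ≤ t) (hv : δ ≤ v) (hvt : v ≤ t)
    {K : ℝ → ℝ → ℝ} (hKm : Measurable fun p : ℝ × ℝ => K p.1 p.2)
    (hKb : ∀ s r, ‖K s r‖ ≤ C)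
    (hlow : ∀ s ∈ Set.Icc (u - δ) u, ∀ r ∈ Set.Icc (v - δ) v, m ≤ K s r)
    (hup : ∀ s ∈ Set.Icc (u - δ) u, ∀ r ∈ Set.Icc (v - δ) v, K s r ≤ M) :
    (∫ s in Set.Icc (0:ℝ) t, ∫ r in Set.Icc (0:ℝ) t,
      psi δ (u - s) * psi δ (v - r) * K s r) ∈ Set.Icc m M := by
  haveI := isFiniteIcc (0:ℝ) t
  set I : ℝ → ℝ := fun s => ∫ r in Set.Icc (0:ℝ) t, psi δ (v - r) * K s r with hIdef
  have hmul : ∀ s, ∫ r in Set.Icc (0:ℝ) t, psi δ (u - s) * psi δ (v - r) * K s r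
      = psi δ (u - s) * I s := by
    intro s; rw [hIdef]; simp only [mul_assoc]; exact integral_const_mul _ _
  simp only [hmul]
  have hIb : ∀ s, ‖I s‖ ≤ δ⁻¹ * C * (volume.restrict (Set.Icc (0:ℝ) t) Set.univ).toReal := by
    intro s
    refine norm_integral_le_of_norm_le_const (ae_of_all _ fun r => ?_)
    rw [norm_mul]
    have hC0 : (0:ℝ) ≤ C := le_trans (norm_nonneg _) (hKb s r)
    exact mul_le_mul (abs_psi_le hδ _) (hKb s r) (norm_nonneg _) (by positivity)
  have hIwin : ∀ s ∈ Set.Icc (u - δ) u, I s ∈ Set.Icc m M := by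
    intro s hs
    refine avg_between hδ hv hvt ?_ (hlow s hs) (hup s hs)
    exact integrableOn_Icc_of_bounded
      ((hKm.comp measurable_prodMk_left).aestronglyMeasurable) (hKb s)
  refine avg_between hδ hu hut ?_ (fun s hs => (hIwin s hs).1) (fun s hs => (hIwin s hs).2)
  exact integrableOn_Icc_of_bounded (inner_int δ v hKm).aestronglyMeasurable hIb

/-- The core pointwise convergence lemma. -/
lemma core {t : ℝ} {Xc Yc : ℝ → ℝ} (hXc : Continuous Xc) (hYc : Continuous Yc)
    {u v : ℝ} (hu : 0 < u) (hut : u ≤ t) (hv : 0 < v) (hvt : v ≤ t) (huv : u ≠ v) :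
    Tendsto (fun ed : ℝ × ℝ => ∫ s in Set.Icc (0:ℝ) t, ∫ r in Set.Icc (0:ℝ) t,
        psi ed.2 (u - s) * psi ed.2 (v - r) * heatKernel1 (|u - v| + 2 * ed.1) (Xc s - Yc r))
      (nhdsWithin (0,0) (Set.Ioi (0:ℝ) ×ˢ Set.Ioi (0:ℝ)))
      (nhds (heatKernel1 (|u - v|) (Xc u - Yc v))) := by
  rw [Metric.tendsto_nhdsWithin_nhds]
  intro η hη
  have hw0 : 0 < |u - v| := abs_pos.mpr (sub_ne_zero.mpr huv)
  obtain ⟨θ, hθ, hθ'⟩ :=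
    Metric.continuousAt_iff.mp (hk_contAt (x := Xc u - Yc v) hw0) (η/2) (by linarith)
  obtain ⟨ρ1, hρ1, hρ1'⟩ :=
    Metric.continuousAt_iff.mp (hXc.continuousAt (x := u)) (θ/4) (by linarith)
  obtain ⟨ρ2, hρ2, hρ2'⟩ :=
    Metric.continuousAt_iff.mp (hYc.continuousAt (x := v)) (θ/4) (by linarith)
  refine ⟨min (min ρ1 ρ2) (min (min u v) (θ/4)), by positivity, ?_⟩
  rintro ⟨ε, δ⟩ hed hdist
  obtain ⟨hε, hδ⟩ : ε ∈ Set.Ioi (0:ℝ) ∧ δ ∈ Set.Ioi (0:ℝ) := hed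
  rw [Set.mem_Ioi] at hε hδ
  rw [Prod.dist_eq] at hdist
  obtain ⟨hd1, hd2⟩ := max_lt_iff.mp hdist
  rw [Real.dist_eq, sub_zero, abs_of_pos hε] at hd1
  rw [Real.dist_eq, sub_zero, abs_of_pos hδ] at hd2
  have hερ : ε < θ/4 := lt_of_lt_of_le hd1 ((min_le_right _ _).trans (min_le_right _ _))
  have hδρ1 : δ < ρ1 := lt_of_lt_of_le hd2 ((min_le_left _ _).trans (min_le_left _ _))
  have hδρ2 : δ < ρ2 := lt_of_lt_of_le hd2 ((min_le_left _ _).trans (min_le_right _ _))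
  have hδu : δ ≤ u := le_of_lt (lt_of_lt_of_le hd2
    ((min_le_right _ _).trans ((min_le_left _ _).trans (min_le_left _ _))))
  have hδv : δ ≤ v := le_of_lt (lt_of_lt_of_le hd2
    ((min_le_right _ _).trans ((min_le_left _ _).trans (min_le_right _ _))))
  have hKest : ∀ s ∈ Set.Icc (u - δ) u, ∀ r ∈ Set.Icc (v - δ) v,
      dist (heatKernel1 (|u - v| + 2 * ε) (Xc s - Yc r))
        (heatKernel1 (|u - v|) (Xc u - Yc v)) < η/2 := by
    intro s hs r hr
    have h1 : dist ((|u - v| + 2 * ε, Xc s - Yc r) : ℝ × ℝ) (|u - v|, Xc u - Yc v) < θ := by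
      rw [Prod.dist_eq]
      apply max_lt
      · rw [Real.dist_eq, add_sub_cancel_left, abs_of_pos (by linarith)]
        linarith
      · have hds : dist (Xc s) (Xc u) < θ/4 := hρ1' (by
          rw [Real.dist_eq]
          exact lt_of_le_of_lt (abs_le.mpr ⟨by linarith [hs.1], by linarith [hs.2]⟩) hδρ1)
        have hdr : dist (Yc r) (Yc v) < θ/4 := hρ2' (by
          rw [Real.dist_eq]
          exact lt_of_le_of_lt (abs_le.mpr ⟨by linarith [hr.1], by linarith [hr.2]⟩) hδρ2)
        calc dist (Xc s - Yc r) (Xc u - Yc v)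
            ≤ dist (Xc s) (Xc u) + dist (Yc r) (Yc v) := dist_sub_sub_le _ _ _ _
          _ < θ/4 + θ/4 := add_lt_add hds hdr
          _ ≤ θ := by linarith
    exact hθ' h1
  have hKm : Measurable fun p : ℝ × ℝ => heatKernel1 (|u - v| + 2 * ε) (Xc p.1 - Yc p.2) :=
    hk_meas.comp (measurable_const.prodMk
      ((hXc.measurable.comp measurable_fst).sub (hYc.measurable.comp measurable_snd)))
  have hKb : ∀ s r, ‖heatKernel1 (|u - v| + 2 * ε) (Xc s - Yc r)‖
      ≤ (2*π*|u - v|) ^ (-(1:ℝ)/2) := by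
    intro s r
    rw [Real.norm_eq_abs, abs_of_nonneg (hk_nonneg (by positivity))]
    exact (hk_le _ (by positivity)).trans (hk_bound_mono hw0 (by linarith))
  have hmem := iterated_avg_between (t := t) hδ hδu hut hδv hvt hKm hKb
    (m := heatKernel1 (|u - v|) (Xc u - Yc v) - η/2)
    (M := heatKernel1 (|u - v|) (Xc u - Yc v) + η/2)
    (fun s hs r hr => by
      have := abs_sub_lt_iff.mp ((Real.dist_eq _ _) ▸ hKest s hs r hr)
      linarith [this.2])
    (fun s hs r hr => by
      have := abs_sub_lt_iff.mp ((Real.dist_eq _ _) ▸ hKest s hs r hr)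
      linarith [this.1])
  rw [Real.dist_eq]
  have h1 := hmem.1
  have h2 := hmem.2
  rw [abs_sub_lt_iff]
  constructor <;> simp only [] <;> [linarith; linarith]

lemma abs_rpow_ii {c : ℝ} (hc : -1 < c) (u a b : ℝ) :
    IntervalIntegrable (fun x => |u - x| ^ c) volume a b := by
  have base : ∀ q : ℝ, 0 ≤ q → IntervalIntegrable (fun x : ℝ => |x| ^ c) volume 0 q := by
    intro q hq
    have h0 := intervalIntegrable_rpow' (a := 0) (b := q) hc
    rw [intervalIntegrable_iff] at h0 ⊢
    refine h0.congr_fun (fun x hx => ?_) measurableSet_uIoc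
    rw [Set.uIoc_of_le hq] at hx
    rw [abs_of_pos hx.1]
  have base' : ∀ q : ℝ, IntervalIntegrable (fun x : ℝ => |x| ^ c) volume 0 q := by
    intro q
    rcases le_total 0 q with h | h
    · exact base q h
    · have h2 := (IntervalIntegrable.iff_comp_neg (by simp)).mp (base (-q) (by linarith))
      have heq : (fun x : ℝ => |(-x)| ^ c) = fun x : ℝ => |x| ^ c :=
        funext fun x => by rw [abs_neg]
      rw [heq, neg_zero, neg_neg] at h2
      exact h2
  have all : ∀ p q : ℝ, IntervalIntegrable (fun x : ℝ => |x| ^ c) volume p q :=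
    fun p q => (base' p).symm.trans (base' q)
  have h3 := (all (u - a) (u - b)).comp_sub_left u
  simpa using h3

lemma slice_integrableOn {c : ℝ} (hc : -1 < c) (u : ℝ) {t : ℝ} (ht : 0 ≤ t) :
    IntegrableOn (fun x => |u - x| ^ c) (Set.Icc (0:ℝ) t) volume :=
  (intervalIntegrable_iff_integrableOn_Icc_of_le ht).mp (abs_rpow_ii hc u 0 t)

lemma slice_bound {t u : ℝ} (ht : 0 ≤ t) (hu : u ∈ Set.Icc (0:ℝ) t) :
    ∫ x in Set.Icc (0:ℝ) t, |u - x| ^ (-(1:ℝ)/2) ≤ 4 * Real.sqrt t := by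
  have h1 : ∫ x in Set.Icc (0:ℝ) t, |u - x| ^ (-(1:ℝ)/2)
      = ∫ x in (0:ℝ)..t, |u - x| ^ (-(1:ℝ)/2) := by
    rw [intervalIntegral.integral_of_le ht, integral_Icc_eq_integral_Ioc]
  rw [h1]
  have hsplit := intervalIntegral.integral_add_adjacent_intervals
    (abs_rpow_ii (by norm_num) u 0 u) (abs_rpow_ii (by norm_num : (-1:ℝ) < -(1:ℝ)/2) u u t)
  rw [← hsplit]
  have e1 : ∫ x in (0:ℝ)..u, |u - x| ^ (-(1:ℝ)/2) = 2 * Real.sqrt u := by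
    have hcg : ∀ x ∈ Set.uIcc (0:ℝ) u, |u - x| ^ (-(1:ℝ)/2) = (u - x) ^ (-(1:ℝ)/2) := by
      intro x hx
      rw [Set.uIcc_of_le hu.1] at hx
      rw [abs_of_nonneg (by linarith [hx.2] : (0:ℝ) ≤ u - x)]
    rw [intervalIntegral.integral_congr hcg,
      intervalIntegral.integral_comp_sub_left (fun y => y ^ (-(1:ℝ)/2)) u]
    rw [sub_self, sub_zero, integral_rpow (Or.inl (by norm_num))]
    rw [show -(1:ℝ)/2 + 1 = 1/2 by norm_num]
    rw [Real.zero_rpow (by norm_num), Real.sqrt_eq_rpow]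
    ring
  have e2 : ∫ x in u..t, |u - x| ^ (-(1:ℝ)/2) = 2 * Real.sqrt (t - u) := by
    have hcg : ∀ x ∈ Set.uIcc u t, |u - x| ^ (-(1:ℝ)/2) = (x - u) ^ (-(1:ℝ)/2) := by
      intro x hx
      rw [Set.uIcc_of_le hu.2] at hx
      rw [abs_sub_comm, abs_of_nonneg (by linarith [hx.1] : (0:ℝ) ≤ x - u)]
    rw [intervalIntegral.integral_congr hcg,
      intervalIntegral.integral_comp_sub_right (fun y => y ^ (-(1:ℝ)/2)) u]
    rw [sub_self, integral_rpow (Or.inl (by norm_num))]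
    rw [show -(1:ℝ)/2 + 1 = 1/2 by norm_num]
    rw [Real.zero_rpow (by norm_num), Real.sqrt_eq_rpow]
    ring
  rw [e1, e2]
  have s1 : Real.sqrt u ≤ Real.sqrt t := Real.sqrt_le_sqrt hu.2
  have s2 : Real.sqrt (t - u) ≤ Real.sqrt t := Real.sqrt_le_sqrt (by linarith [hu.1])
  linarith

lemma gd_integrable {t : ℝ} (ht : 0 < t) :
    Integrable (fun p : ℝ × ℝ => (2*π*|p.1 - p.2|) ^ (-(1:ℝ)/2))
      ((volume.restrict (Set.Icc (0:ℝ) t)).prod (volume.restrict (Set.Icc (0:ℝ) t))) := by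
  haveI := isFiniteIcc (0:ℝ) t
  have hmeas0 : Measurable fun p : ℝ × ℝ => |p.1 - p.2| ^ (-(1:ℝ)/2) :=
    (measurable_rpow_const _).comp ((measurable_fst.sub measurable_snd).abs)
  have key : Integrable (fun p : ℝ × ℝ => |p.1 - p.2| ^ (-(1:ℝ)/2))
      ((volume.restrict (Set.Icc (0:ℝ) t)).prod (volume.restrict (Set.Icc (0:ℝ) t))) := by
    rw [integrable_prod_iff hmeas0.aestronglyMeasurable]
    constructor
    · filter_upwards [ae_restrict_mem measurableSet_Icc] with u hu
      exact slice_integrableOn (by norm_num) u ht.le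
    · refine Integrable.mono' (integrable_const (4 * Real.sqrt t)) ?_ ?_
      · exact (hmeas0.norm.stronglyMeasurable.integral_prod_right').aestronglyMeasurable
      · filter_upwards [ae_restrict_mem measurableSet_Icc] with u hu
        rw [Real.norm_eq_abs, abs_of_nonneg (integral_nonneg fun v => norm_nonneg _)]
        have hn : ∀ v : ℝ, ‖|u - v| ^ (-(1:ℝ)/2)‖ = |u - v| ^ (-(1:ℝ)/2) :=
          fun v => Real.norm_of_nonneg (Real.rpow_nonneg (abs_nonneg _) _)
        simp only [hn]
        exact slice_bound ht.le hu
  have heq : (fun p : ℝ × ℝ => (2*π*|p.1 - p.2|) ^ (-(1:ℝ)/2))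
      = fun p : ℝ × ℝ => (2*π) ^ (-(1:ℝ)/2) * |p.1 - p.2| ^ (-(1:ℝ)/2) := by
    funext p; rw [Real.mul_rpow (by positivity) (abs_nonneg _)]
  rw [heq]
  exact key.const_mul _

end SmoothedAux

/-- As `(ε,δ) → (0,0)`, the smoothed quadruple integral converges to
`∫_{[0,t]²} p_{|s-r|}(X_s - Y_r) dr ds` (case `d = 1`). -/
theorem smoothed_integral_tendsto (t : ℝ) (ht : 0 < t) (X Y : ℝ → ℝ)
    (hX : ContinuousOn X (Set.Icc 0 t)) (hY : ContinuousOn Y (Set.Icc 0 t)) :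
    Tendsto
      (fun ed : ℝ × ℝ =>
        ∫ u in Set.Icc (0 : ℝ) t, ∫ v in Set.Icc (0 : ℝ) t,
          ∫ s in Set.Icc (0 : ℝ) t, ∫ r in Set.Icc (0 : ℝ) t,
            (if u - s ∈ Set.Icc (0 : ℝ) ed.2 then ed.2⁻¹ else 0) *
              (if v - r ∈ Set.Icc (0 : ℝ) ed.2 then ed.2⁻¹ else 0) *
                heatKernel1 (|u - v| + 2 * ed.1) (X s - Y r))
      (nhdsWithin (0, 0) (Set.Ioi (0 : ℝ) ×ˢ Set.Ioi (0 : ℝ)))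
      (nhds (∫ s in Set.Icc (0 : ℝ) t, ∫ r in Set.Icc (0 : ℝ) t,
        heatKernel1 |s - r| (X s - Y r))) := by
  classical
  open SmoothedAux in
  -- continuous extensions of X, Y
  have h0t : (0:ℝ) ≤ t := ht.le
  set q : ℝ → ℝ := fun x => max 0 (min x t) with hqdef
  have hqc : Continuous q := continuous_const.max (continuous_id.min continuous_const)
  have hqmem : ∀ x, q x ∈ Set.Icc (0:ℝ) t := fun x =>
    ⟨le_max_left _ _, max_le h0t (min_le_right _ _)⟩
  have hqid : ∀ x ∈ Set.Icc (0:ℝ) t, q x = x := fun x hx => by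
    rw [hqdef]; simp only; rw [min_eq_left hx.2, max_eq_right hx.1]
  set Xc : ℝ → ℝ := X ∘ q with hXcdef
  set Yc : ℝ → ℝ := Y ∘ q with hYcdef
  have hXc : Continuous Xc := hX.comp_continuous hqc hqmem
  have hYc : Continuous Yc := hY.comp_continuous hqc hqmem
  have hXeq : ∀ x ∈ Set.Icc (0:ℝ) t, Xc x = X x := fun x hx => by
    rw [hXcdef]; simp only [Function.comp_apply, hqid x hx]
  have hYeq : ∀ x ∈ Set.Icc (0:ℝ) t, Yc x = Y x := fun x hx => by
    rw [hYcdef]; simp only [Function.comp_apply, hqid x hx]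
  haveI := isFiniteIcc (0:ℝ) t
  set μt : Measure ℝ := volume.restrict (Set.Icc (0:ℝ) t) with hμt
  -- replace X, Y by Xc, Yc in the target
  have htarget : (∫ s in Set.Icc (0 : ℝ) t, ∫ r in Set.Icc (0 : ℝ) t,
      heatKernel1 |s - r| (X s - Y r))
      = ∫ s in Set.Icc (0 : ℝ) t, ∫ r in Set.Icc (0 : ℝ) t,
        heatKernel1 |s - r| (Xc s - Yc r) := by
    refine setIntegral_congr_fun measurableSet_Icc fun s hs => ?_
    refine setIntegral_congr_fun measurableSet_Icc fun r hr => ?_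
    rw [hXeq s hs, hYeq r hr]
  rw [htarget]
  -- replace X, Y by Xc, Yc in the approximating functions
  have hquadeq : ∀ ed : ℝ × ℝ,
      (∫ u in Set.Icc (0 : ℝ) t, ∫ v in Set.Icc (0 : ℝ) t,
        ∫ s in Set.Icc (0 : ℝ) t, ∫ r in Set.Icc (0 : ℝ) t,
          psi ed.2 (u - s) * psi ed.2 (v - r) *
            heatKernel1 (|u - v| + 2 * ed.1) (Xc s - Yc r))
      = ∫ u in Set.Icc (0 : ℝ) t, ∫ v in Set.Icc (0 : ℝ) t,
          ∫ s in Set.Icc (0 : ℝ) t, ∫ r in Set.Icc (0 : ℝ) t,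
            (if u - s ∈ Set.Icc (0 : ℝ) ed.2 then ed.2⁻¹ else 0) *
              (if v - r ∈ Set.Icc (0 : ℝ) ed.2 then ed.2⁻¹ else 0) *
                heatKernel1 (|u - v| + 2 * ed.1) (X s - Y r) := by
    intro ed
    refine setIntegral_congr_fun measurableSet_Icc fun u _ => ?_
    refine setIntegral_congr_fun measurableSet_Icc fun v _ => ?_
    refine setIntegral_congr_fun measurableSet_Icc fun s hs => ?_
    refine setIntegral_congr_fun measurableSet_Icc fun r hr => ?_
    rw [hXeq s hs, hYeq r hr]
    rfl
  refine Tendsto.congr (fun ed => hquadeq ed) ?_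
  -- now everything is in terms of Xc, Yc
  set P : Measure (ℝ × ℝ) := μt.prod μt with hP
  haveI : IsFiniteMeasure P := by rw [hP]; infer_instance
  set gd : ℝ × ℝ → ℝ := fun p => (2*π*|p.1 - p.2|) ^ (-(1:ℝ)/2) with hgd
  -- a.e. facts on P
  have hdiagmeas : MeasurableSet {p : ℝ × ℝ | p.1 = p.2} :=
    measurableSet_eq_fun measurable_fst measurable_snd
  have hsing : ∀ x : ℝ, μt {x} = 0 := fun x => by
    rw [hμt, Measure.restrict_apply (measurableSet_singleton x)]
    exact measure_mono_null Set.inter_subset_left Real.volume_singleton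
  have hne : ∀ᵐ p ∂P, p.1 ≠ p.2 := by
    rw [ae_iff]
    have hset : {p : ℝ × ℝ | ¬ p.1 ≠ p.2} = {p : ℝ × ℝ | p.1 = p.2} := by
      ext p; simp [not_not]
    rw [hset, hP, Measure.prod_apply hdiagmeas]
    have hpre : ∀ x : ℝ, (Prod.mk x ⁻¹' {p : ℝ × ℝ | p.1 = p.2}) = {x} := by
      intro x; ext y; simp [eq_comm]
    simp only [hpre, hsing]
    simp
  have hmemIcc : ∀ᵐ p ∂P, p.1 ∈ Set.Icc (0:ℝ) t ∧ p.2 ∈ Set.Icc (0:ℝ) t := by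
    rw [hP, hμt, Measure.prod_restrict]
    filter_upwards [ae_restrict_mem (measurableSet_Icc.prod measurableSet_Icc)] with p hp
    exact hp
  have hpos1 : ∀ᵐ p ∂P, 0 < p.1 := by
    rw [ae_iff]
    have h5 : {p : ℝ × ℝ | ¬ 0 < p.1} ⊆ (Set.Iic (0:ℝ)) ×ˢ (Set.univ : Set ℝ) :=
      fun p hp => ⟨not_lt.mp hp, trivial⟩
    refine measure_mono_null h5 ?_
    rw [hP, Measure.prod_prod]
    have h6 : μt (Set.Iic 0) = 0 := by
      rw [hμt, Measure.restrict_apply measurableSet_Iic]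
      refine measure_mono_null ?_ (Real.volume_singleton (a := (0:ℝ)))
      exact fun x hx => Set.mem_singleton_iff.mpr (le_antisymm hx.1 hx.2.1)
    rw [h6, zero_mul]
  have hpos2 : ∀ᵐ p ∂P, 0 < p.2 := by
    rw [ae_iff]
    have h5 : {p : ℝ × ℝ | ¬ 0 < p.2} ⊆ (Set.univ : Set ℝ) ×ˢ (Set.Iic (0:ℝ)) :=
      fun p hp => ⟨trivial, not_lt.mp hp⟩
    refine measure_mono_null h5 ?_
    rw [hP, Measure.prod_prod]
    have h6 : μt (Set.Iic 0) = 0 := by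
      rw [hμt, Measure.restrict_apply measurableSet_Iic]
      refine measure_mono_null ?_ (Real.volume_singleton (a := (0:ℝ)))
      exact fun x hx => Set.mem_singleton_iff.mpr (le_antisymm hx.1 hx.2.1)
    rw [h6, mul_zero]
  -- joint measurability of the full integrand
  have hΦm : ∀ ε δ : ℝ, Measurable fun z : (ℝ × ℝ) × (ℝ × ℝ) =>
      psi δ (z.1.1 - z.2.1) * psi δ (z.1.2 - z.2.2) *
        heatKernel1 (|z.1.1 - z.1.2| + 2 * ε) (Xc z.2.1 - Yc z.2.2) := by
    intro ε δ
    refine Measurable.mul (Measurable.mul ?_ ?_) ?_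
    · exact (psi_meas δ).comp (measurable_fst.fst.sub measurable_snd.fst)
    · exact (psi_meas δ).comp (measurable_fst.snd.sub measurable_snd.snd)
    · exact hk_meas.comp ((((measurable_fst.fst.sub measurable_fst.snd).abs).add
        measurable_const).prodMk ((hXc.measurable.comp measurable_snd.fst).sub
        (hYc.measurable.comp measurable_snd.snd)))
  -- the inner double integral as a product integral
  have hGkey : ∀ ε δ : ℝ, 0 < ε → 0 < δ → ∀ p : ℝ × ℝ,
      (∫ s in Set.Icc (0:ℝ) t, ∫ r in Set.Icc (0:ℝ) t,
          psi δ (p.1 - s) * psi δ (p.2 - r) *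
            heatKernel1 (|p.1 - p.2| + 2 * ε) (Xc s - Yc r))
        = ∫ z : ℝ × ℝ, psi δ (p.1 - z.1) * psi δ (p.2 - z.2) *
            heatKernel1 (|p.1 - p.2| + 2 * ε) (Xc z.1 - Yc z.2) ∂P := by
    intro ε δ hε hδ p
    have hm2 : Measurable fun z : ℝ × ℝ => psi δ (p.1 - z.1) * psi δ (p.2 - z.2) *
        heatKernel1 (|p.1 - p.2| + 2 * ε) (Xc z.1 - Yc z.2) :=
      (hΦm ε δ).comp measurable_prodMk_left
    have hb : ∀ z : ℝ × ℝ, ‖psi δ (p.1 - z.1) * psi δ (p.2 - z.2) *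
        heatKernel1 (|p.1 - p.2| + 2 * ε) (Xc z.1 - Yc z.2)‖
        ≤ δ⁻¹ * δ⁻¹ * (2*π*(2*ε)) ^ (-(1:ℝ)/2) := by
      intro z
      rw [norm_mul, norm_mul]
      have h1 : ‖psi δ (p.1 - z.1)‖ ≤ δ⁻¹ := abs_psi_le hδ _
      have h2 : ‖psi δ (p.2 - z.2)‖ ≤ δ⁻¹ := abs_psi_le hδ _
      have h3 : ‖heatKernel1 (|p.1 - p.2| + 2 * ε) (Xc z.1 - Yc z.2)‖
          ≤ (2*π*(2*ε)) ^ (-(1:ℝ)/2) := by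
        rw [Real.norm_eq_abs, abs_of_nonneg (hk_nonneg (by positivity))]
        exact (hk_le _ (by positivity)).trans
          (hk_bound_mono (by positivity) (by linarith [abs_nonneg (p.1 - p.2)]))
      exact mul_le_mul (mul_le_mul h1 h2 (norm_nonneg _) (by positivity)) h3
        (norm_nonneg _) (by positivity)
    have hint : Integrable (Function.uncurry fun s r =>
        psi δ (p.1 - s) * psi δ (p.2 - r) *
          heatKernel1 (|p.1 - p.2| + 2 * ε) (Xc s - Yc r)) P :=
      ⟨hm2.aestronglyMeasurable, HasFiniteIntegral.of_bounded (ae_of_all _ hb)⟩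
    exact integral_integral hint
  -- measurability of the inner double integral in (u,v)
  have hGmeas : ∀ ε δ : ℝ, 0 < ε → 0 < δ → AEStronglyMeasurable (fun p : ℝ × ℝ =>
      ∫ s in Set.Icc (0:ℝ) t, ∫ r in Set.Icc (0:ℝ) t,
        psi δ (p.1 - s) * psi δ (p.2 - r) *
          heatKernel1 (|p.1 - p.2| + 2 * ε) (Xc s - Yc r)) P := by
    intro ε δ hε hδ
    have heq2 : (fun p : ℝ × ℝ =>
        ∫ s in Set.Icc (0:ℝ) t, ∫ r in Set.Icc (0:ℝ) t,
          psi δ (p.1 - s) * psi δ (p.2 - r) *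
            heatKernel1 (|p.1 - p.2| + 2 * ε) (Xc s - Yc r))
        = fun p : ℝ × ℝ => ∫ z : ℝ × ℝ, psi δ (p.1 - z.1) * psi δ (p.2 - z.2) *
            heatKernel1 (|p.1 - p.2| + 2 * ε) (Xc z.1 - Yc z.2) ∂P :=
      funext fun p => hGkey ε δ hε hδ p
    rw [heq2]
    exact ((hΦm ε δ).stronglyMeasurable.integral_prod_right').aestronglyMeasurable
  -- the domination
  have hGb : ∀ ε δ : ℝ, 0 < ε → 0 < δ → ∀ᵐ p ∂P,
      ‖∫ s in Set.Icc (0:ℝ) t, ∫ r in Set.Icc (0:ℝ) t,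
        psi δ (p.1 - s) * psi δ (p.2 - r) *
          heatKernel1 (|p.1 - p.2| + 2 * ε) (Xc s - Yc r)‖ ≤ gd p := by
    intro ε δ hε hδ
    filter_upwards [hne] with p hp
    have hw0 : 0 < |p.1 - p.2| := abs_pos.mpr (sub_ne_zero.mpr hp)
    have hKm : Measurable fun z : ℝ × ℝ =>
        heatKernel1 (|p.1 - p.2| + 2 * ε) (Xc z.1 - Yc z.2) :=
      hk_meas.comp (measurable_const.prodMk
        ((hXc.measurable.comp measurable_fst).sub (hYc.measurable.comp measurable_snd)))
    rw [Real.norm_eq_abs,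
      abs_of_nonneg (iterated_nonneg hδ fun s r => hk_nonneg (by positivity))]
    refine iterated_le hδ (Real.rpow_nonneg (by positivity) _) hKm
      (fun s r => hk_nonneg (by positivity)) (fun s r => ?_)
    exact (hk_le _ (by positivity)).trans (hk_bound_mono hw0 (by linarith))
  -- pointwise limit
  have hlim : ∀ᵐ p ∂P, Tendsto (fun ed : ℝ × ℝ =>
      ∫ s in Set.Icc (0:ℝ) t, ∫ r in Set.Icc (0:ℝ) t,
        psi ed.2 (p.1 - s) * psi ed.2 (p.2 - r) *
          heatKernel1 (|p.1 - p.2| + 2 * ed.1) (Xc s - Yc r))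
      (nhdsWithin (0, 0) (Set.Ioi (0 : ℝ) ×ˢ Set.Ioi (0 : ℝ)))
      (nhds (heatKernel1 (|p.1 - p.2|) (Xc p.1 - Yc p.2))) := by
    filter_upwards [hne, hmemIcc, hpos1, hpos2] with p h1 h2 h3 h4
    exact core hXc hYc h3 h2.1.2 h4 h2.2.2 h1
  -- the dominated convergence theorem
  have hDCT := tendsto_integral_filter_of_dominated_convergence (μ := P)
      (l := nhdsWithin ((0:ℝ), (0:ℝ)) (Set.Ioi (0:ℝ) ×ˢ Set.Ioi (0:ℝ)))
      (F := fun (ed : ℝ × ℝ) (p : ℝ × ℝ) =>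
        ∫ s in Set.Icc (0:ℝ) t, ∫ r in Set.Icc (0:ℝ) t,
          psi ed.2 (p.1 - s) * psi ed.2 (p.2 - r) *
            heatKernel1 (|p.1 - p.2| + 2 * ed.1) (Xc s - Yc r))
      (f := fun p : ℝ × ℝ => heatKernel1 (|p.1 - p.2|) (Xc p.1 - Yc p.2)) gd
      (by
        filter_upwards [self_mem_nhdsWithin] with ed hed
        exact hGmeas ed.1 ed.2 hed.1 hed.2)
      (by
        filter_upwards [self_mem_nhdsWithin] with ed hed
        exact hGb ed.1 ed.2 hed.1 hed.2)
      (by exact gd_integrable ht)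
      hlim
  -- identify the limit value
  have hfint : Integrable (Function.uncurry fun s r =>
      heatKernel1 (|s - r|) (Xc s - Yc r)) P := by
    refine Integrable.mono' (by exact gd_integrable ht) ?_ (ae_of_all _ ?_)
    · exact (hk_meas.comp (((measurable_fst.sub measurable_snd).abs).prodMk
        ((hXc.measurable.comp measurable_fst).sub
          (hYc.measurable.comp measurable_snd)))).aestronglyMeasurable
    · intro z
      rcases eq_or_ne z.1 z.2 with h | h
      · show ‖heatKernel1 (|z.1 - z.2|) (Xc z.1 - Yc z.2)‖ ≤ gd z
        rw [h, sub_self, abs_zero, hk_zero, norm_zero]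
        exact Real.rpow_nonneg (by positivity) _
      · have hw0 : 0 < |z.1 - z.2| := abs_pos.mpr (sub_ne_zero.mpr h)
        show ‖heatKernel1 (|z.1 - z.2|) (Xc z.1 - Yc z.2)‖ ≤ gd z
        rw [Real.norm_eq_abs, abs_of_nonneg (hk_nonneg hw0.le)]
        exact hk_le _ hw0
  have hT : (∫ s in Set.Icc (0:ℝ) t, ∫ r in Set.Icc (0:ℝ) t,
      heatKernel1 (|s - r|) (Xc s - Yc r))
      = ∫ p : ℝ × ℝ, heatKernel1 (|p.1 - p.2|) (Xc p.1 - Yc p.2) ∂P :=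
    integral_integral hfint
  rw [hT]
  -- finally, rewrite the iterated outer integrals as product integrals
  refine Tendsto.congr' ?_ hDCT
  filter_upwards [self_mem_nhdsWithin] with ed hed
  have hε : 0 < ed.1 := hed.1
  have hδ : 0 < ed.2 := hed.2
  have hintG : Integrable (Function.uncurry fun u v =>
      ∫ s in Set.Icc (0:ℝ) t, ∫ r in Set.Icc (0:ℝ) t,
        psi ed.2 (u - s) * psi ed.2 (v - r) *
          heatKernel1 (|u - v| + 2 * ed.1) (Xc s - Yc r)) P :=
    Integrable.mono' (by exact gd_integrable ht)
      (hGmeas ed.1 ed.2 hε hδ) (hGb ed.1 ed.2 hε hδ)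
  exact (integral_integral hintG).symm
end
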